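/- If π_θ is a policy family differentiable in parameter θ, then the local surrogate L_{π_{θ₀}}(π_θ) = η(π_{θ₀}) + Σ_s ρ_{π_{θ₀}}(s) Σ_a π_θ(a|s) A_{π_{θ₀}}(s,a) matches η(π_θ) to first order at θ = θ₀: L_{π_{θ₀}}(π_{θ₀}) = η(π_{θ₀}) and ∇_θ L_{π_{θ₀}}(π_θ)|_{θ=θ₀} = ∇_θ η(π_θ)|_{θ=θ₀}. -/

import Mathlib

set_option maxHeartbeats 1000000

open Finset Filter

/-- State distribution at time `t` when executing policy `π`, starting from `ρ₀`. -/
noncomputable def stateDist {S A : Type} [Fintype S] [Fintype A]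
    (P : S → A → S → ℝ) (π : S → A → ℝ) (ρ₀ : S → ℝ) : ℕ → S → ℝ
  | 0 => ρ₀
  | (t+1) => fun s' => ∑ s, ∑ a, stateDist P π ρ₀ t s * π s a * P s a s'

/-- Unnormalized discounted state visitation frequency. -/
noncomputable def visit {S A : Type} [Fintype S] [Fintype A]
    (P : S → A → S → ℝ) (π : S → A → ℝ) (ρ₀ : S → ℝ) (γ : ℝ) (s : S) : ℝ :=
  ∑' t : ℕ, γ ^ t * stateDist P π ρ₀ t s

/-- The surrogate L matches η to first order at θ₀. -/
theorem stmt_2 {S A : Type} [Fintype S] [Fintype A]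
    {E : Type} [NormedAddCommGroup E] [NormedSpace ℝ E]
    (P : S → A → S → ℝ) (r : S → ℝ) (ρ₀ : S → ℝ) (γ : ℝ)
    (π : E → S → A → ℝ) (V : E → S → ℝ) (Q Aπ : S → A → ℝ) (θ₀ : E)
    (hγ0 : 0 < γ) (hγ1 : γ < 1)
    (hPpos : ∀ s a s', 0 ≤ P s a s') (hPsum : ∀ s a, ∑ s', P s a s' = 1)
    (hρpos : ∀ s, 0 ≤ ρ₀ s) (hρsum : ∑ s, ρ₀ s = 1)
    (hπpos : ∀ θ s a, 0 ≤ π θ s a) (hπsum : ∀ θ s, ∑ a, π θ s a = 1)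
    (hπdiff : ∀ s a, Differentiable ℝ (fun θ => π θ s a))
    (hVdiff : ∀ s, Differentiable ℝ (fun θ => V θ s))
    (hV : ∀ θ s, V θ s = ∑ a, π θ s a * (r s + γ * ∑ s', P s a s' * V θ s'))
    (hQ : ∀ s a, Q s a = r s + γ * ∑ s', P s a s' * V θ₀ s')
    (hA : ∀ s a, Aπ s a = Q s a - V θ₀ s)
    (η L : E → ℝ)
    (hη : ∀ θ, η θ = ∑ s, ρ₀ s * V θ s)
    (hL : ∀ θ, L θ = η θ₀ + ∑ s, visit P (π θ₀) ρ₀ γ s * ∑ a, π θ s a * Aπ s a) :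
    L θ₀ = η θ₀ ∧ fderiv ℝ L θ₀ = fderiv ℝ η θ₀ := by
  classical
  set d : ℕ → S → ℝ := stateDist P (π θ₀) ρ₀ with hd
  have hd0 : d 0 = ρ₀ := rfl
  have hdsucc : ∀ t s', d (t+1) s' = ∑ s, ∑ a, d t s * π θ₀ s a * P s a s' :=
    fun t s' => rfl
  have hd_nonneg : ∀ t s, 0 ≤ d t s := by
    intro t
    induction t with
    | zero => exact hρpos
    | succ t ih =>
      intro s'
      rw [hdsucc]
      refine Finset.sum_nonneg fun s _ => Finset.sum_nonneg fun a _ => ?_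
      exact mul_nonneg (mul_nonneg (ih s) (hπpos θ₀ s a)) (hPpos s a s')
  have hd_sum : ∀ t, ∑ s, d t s = 1 := by
    intro t
    induction t with
    | zero => exact hρsum
    | succ t ih =>
      calc ∑ s', d (t+1) s' = ∑ s', ∑ s, ∑ a, d t s * π θ₀ s a * P s a s' := by
            simp [hdsucc]
        _ = ∑ s, ∑ a, d t s * π θ₀ s a * ∑ s', P s a s' := by
            rw [Finset.sum_comm]
            refine Finset.sum_congr rfl fun s _ => ?_
            rw [Finset.sum_comm]
            exact Finset.sum_congr rfl fun a _ => (Finset.mul_sum _ _ _).symm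
        _ = 1 := by
            simp only [hPsum, mul_one]
            calc ∑ s, ∑ a, d t s * π θ₀ s a = ∑ s, d t s * ∑ a, π θ₀ s a := by
                  exact Finset.sum_congr rfl fun s _ => (Finset.mul_sum _ _ _).symm
              _ = 1 := by simp [hπsum, ih]
  have hd_le : ∀ t s, d t s ≤ 1 := by
    intro t s
    calc d t s ≤ ∑ s, d t s := Finset.single_le_sum (fun s _ => hd_nonneg t s) (mem_univ s)
      _ = 1 := hd_sum t
  set pa : S → A → (E →L[ℝ] ℝ) := fun s a => fderiv ℝ (fun θ => π θ s a) θ₀ with hpadef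
  set Gd : S → (E →L[ℝ] ℝ) := fun s => fderiv ℝ (fun θ => V θ s) θ₀ with hGddef
  set Dm : S → (E →L[ℝ] ℝ) := fun s => ∑ a, Q s a • pa s a with hDmdef
  have hpa : ∀ s a, HasFDerivAt (fun θ => π θ s a) (pa s a) θ₀ := by
    intro s a
    rw [hpadef]
    exact ((hπdiff s a) θ₀).hasFDerivAt
  have hGd : ∀ s, HasFDerivAt (fun θ => V θ s) (Gd s) θ₀ := by
    intro s
    rw [hGddef]
    exact ((hVdiff s) θ₀).hasFDerivAt
  have hpasum : ∀ s, ∑ a, pa s a = 0 := by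
    intro s
    have h1 : HasFDerivAt (fun θ => ∑ a, π θ s a) (∑ a, pa s a) θ₀ := by
      refine HasFDerivAt.fun_sum ?_
      intro a _
      exact hpa s a
    have h2 : HasFDerivAt (fun θ => ∑ a, π θ s a) (0 : E →L[ℝ] ℝ) θ₀ := by
      have he : (fun θ : E => ∑ a, π θ s a) = fun _ => (1:ℝ) := funext fun θ => hπsum θ s
      rw [he]; exact hasFDerivAt_const 1 θ₀
    exact h1.unique h2
  have hBell : ∀ s, Gd s = Dm s + ∑ s', (γ * ∑ a, π θ₀ s a * P s a s') • Gd s' := by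
    intro s
    have hrhs : HasFDerivAt (fun θ => V θ s)
        (∑ a, (π θ₀ s a • (γ • ∑ s', P s a s' • Gd s') + Q s a • pa s a)) θ₀ := by
      have heq : (fun θ => V θ s)
          = fun θ => ∑ a, π θ s a * (r s + γ * ∑ s', P s a s' * V θ s') :=
        funext fun θ => hV θ s
      rw [heq]
      refine HasFDerivAt.fun_sum fun a _ => ?_
      have h1 : HasFDerivAt (fun θ => ∑ s', P s a s' * V θ s') (∑ s', P s a s' • Gd s') θ₀ :=
        HasFDerivAt.fun_sum fun s' _ => (hGd s').const_mul (P s a s')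
      have hg : HasFDerivAt (fun θ => r s + γ * ∑ s', P s a s' * V θ s')
          (γ • ∑ s', P s a s' • Gd s') θ₀ :=
        (h1.const_mul γ).const_add (r s)
      have hmul := (hpa s a).mul hg
      rw [← hQ s a] at hmul
      exact hmul
    have huniq := (hGd s).unique hrhs
    rw [huniq, Finset.sum_add_distrib]
    rw [add_comm]
    congr 1
    calc ∑ a, π θ₀ s a • (γ • ∑ s', P s a s' • Gd s')
        = ∑ a, ∑ s', (π θ₀ s a * (γ * P s a s')) • Gd s' := by
          refine Finset.sum_congr rfl fun a _ => ?_
          rw [Finset.smul_sum, Finset.smul_sum]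
          refine Finset.sum_congr rfl fun s' _ => ?_
          rw [smul_smul, smul_smul, mul_assoc]
      _ = ∑ s', (γ * ∑ a, π θ₀ s a * P s a s') • Gd s' := by
          rw [Finset.sum_comm]
          refine Finset.sum_congr rfl fun s' _ => ?_
          rw [← Finset.sum_smul]
          congr 1
          rw [Finset.mul_sum]
          exact Finset.sum_congr rfl fun a _ => by ring
  have key : ∀ n, ∑ s, ρ₀ s • Gd s
      = (∑ t ∈ Finset.range n, γ^t • ∑ s, d t s • Dm s) + γ^n • ∑ s, d n s • Gd s := by
    intro n
    induction n with
    | zero => simp [hd0]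
    | succ n ih =>
      have step : ∑ s, d n s • Gd s
          = (∑ s, d n s • Dm s) + γ • ∑ s', d (n+1) s' • Gd s' := by
        calc ∑ s, d n s • Gd s
            = ∑ s, d n s • (Dm s + ∑ s', (γ * ∑ a, π θ₀ s a * P s a s') • Gd s') :=
              Finset.sum_congr rfl fun s _ => by rw [← hBell s]
          _ = (∑ s, d n s • Dm s)
              + ∑ s, ∑ s', (d n s * (γ * ∑ a, π θ₀ s a * P s a s')) • Gd s' := by
              rw [← Finset.sum_add_distrib]
              refine Finset.sum_congr rfl fun s _ => ?_
              rw [smul_add]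
              congr 1
              rw [Finset.smul_sum]
              refine Finset.sum_congr rfl fun s' _ => ?_
              rw [smul_smul]
          _ = (∑ s, d n s • Dm s) + γ • ∑ s', d (n+1) s' • Gd s' := by
              congr 1
              rw [Finset.sum_comm, Finset.smul_sum]
              refine Finset.sum_congr rfl fun s' _ => ?_
              rw [smul_smul, ← Finset.sum_smul]
              congr 1
              rw [hdsucc]
              simp only [Finset.mul_sum]
              refine Finset.sum_congr rfl fun s _ => Finset.sum_congr rfl fun a _ => ?_
              ring
      rw [ih, Finset.sum_range_succ, step, smul_add, smul_smul, ← pow_succ, add_assoc]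
  have hrem : Tendsto (fun n => γ^n • ∑ s, d n s • Gd s) atTop (nhds 0) := by
    have hb : ∀ n, ‖γ^n • ∑ s, d n s • Gd s‖ ≤ γ^n * ∑ s, ‖Gd s‖ := by
      intro n
      calc ‖γ^n • ∑ s, d n s • Gd s‖ = ‖(γ^n : ℝ)‖ * ‖∑ s, d n s • Gd s‖ := by
            exact norm_smul (γ^n) (∑ s, d n s • Gd s)
        _ = γ^n * ‖∑ s, d n s • Gd s‖ := by
            rw [Real.norm_eq_abs, abs_of_nonneg (pow_nonneg hγ0.le n)]
        _ ≤ γ^n * ∑ s, ‖Gd s‖ := by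
            refine mul_le_mul_of_nonneg_left ?_ (pow_nonneg hγ0.le n)
            refine (norm_sum_le _ _).trans (Finset.sum_le_sum fun s _ => ?_)
            calc ‖d n s • Gd s‖ = ‖d n s‖ * ‖Gd s‖ := by exact norm_smul (d n s) (Gd s)
              _ = d n s * ‖Gd s‖ := by
                  rw [Real.norm_eq_abs, abs_of_nonneg (hd_nonneg n s)]
              _ ≤ 1 * ‖Gd s‖ := mul_le_mul_of_nonneg_right (hd_le n s) (norm_nonneg _)
              _ = ‖Gd s‖ := one_mul _
    have hγn : Tendsto (fun n => γ^n * ∑ s, ‖Gd s‖) atTop (nhds 0) := by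
      have := (tendsto_pow_atTop_nhds_zero_of_lt_one hγ0.le hγ1).mul_const (∑ s, ‖Gd s‖)
      simpa using this
    exact squeeze_zero_norm hb hγn
  have hptend : Tendsto (fun n => ∑ t ∈ Finset.range n, γ^t • ∑ s, d t s • Dm s) atTop
      (nhds (∑ s, ρ₀ s • Gd s)) := by
    have he : (fun n => ∑ t ∈ Finset.range n, γ^t • ∑ s, d t s • Dm s)
        = fun n => (∑ s, ρ₀ s • Gd s) - γ^n • ∑ s, d n s • Gd s :=
      funext fun n => by rw [key n]; abel
    rw [he]
    simpa using tendsto_const_nhds.sub hrem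
  have hsummand : ∀ s, Summable (fun t => γ^t * d t s) := by
    intro s
    refine Summable.of_nonneg_of_le
      (fun t => mul_nonneg (pow_nonneg hγ0.le t) (hd_nonneg t s)) (fun t => ?_)
      (summable_geometric_of_lt_one hγ0.le hγ1)
    calc γ^t * d t s ≤ γ^t * 1 :=
          mul_le_mul_of_nonneg_left (hd_le t s) (pow_nonneg hγ0.le t)
      _ = γ^t := mul_one _
  have hS : Summable (fun t => γ^t • ∑ s, d t s • Dm s) := by
    refine Summable.of_norm_bounded (g := fun t => γ^t * ∑ s, ‖Dm s‖)
      ((summable_geometric_of_lt_one hγ0.le hγ1).mul_right _) (fun t => ?_)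
    calc ‖γ^t • ∑ s, d t s • Dm s‖ = ‖(γ^t : ℝ)‖ * ‖∑ s, d t s • Dm s‖ := by
          exact norm_smul (γ^t) (∑ s, d t s • Dm s)
      _ = γ^t * ‖∑ s, d t s • Dm s‖ := by
          rw [Real.norm_eq_abs, abs_of_nonneg (pow_nonneg hγ0.le t)]
      _ ≤ γ^t * ∑ s, ‖Dm s‖ := by
          refine mul_le_mul_of_nonneg_left ?_ (pow_nonneg hγ0.le t)
          refine (norm_sum_le _ _).trans (Finset.sum_le_sum fun s _ => ?_)
          calc ‖d t s • Dm s‖ = ‖d t s‖ * ‖Dm s‖ := by exact norm_smul (d t s) (Dm s)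
            _ = d t s * ‖Dm s‖ := by
                rw [Real.norm_eq_abs, abs_of_nonneg (hd_nonneg t s)]
            _ ≤ 1 * ‖Dm s‖ := mul_le_mul_of_nonneg_right (hd_le t s) (norm_nonneg _)
            _ = ‖Dm s‖ := one_mul _
  have hEq1 : (∑' t, γ^t • ∑ s, d t s • Dm s) = ∑ s, ρ₀ s • Gd s :=
    tendsto_nhds_unique hS.hasSum.tendsto_sum_nat hptend
  have hEq2 : (∑' t, γ^t • ∑ s, d t s • Dm s) = ∑ s, visit P (π θ₀) ρ₀ γ s • Dm s := by
    have h1 : ∀ t : ℕ, γ^t • ∑ s, d t s • Dm s = ∑ s, (γ^t * d t s) • Dm s := by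
      intro t
      rw [Finset.smul_sum]
      exact Finset.sum_congr rfl fun s _ => by rw [smul_smul]
    rw [tsum_congr h1, Summable.tsum_finsetSum (fun s _ => (hsummand s).smul_const (Dm s))]
    refine Finset.sum_congr rfl fun s _ => ?_
    rw [Summable.tsum_smul_const (hsummand s)]
    rfl
  have hηd : HasFDerivAt η (∑ s, ρ₀ s • Gd s) θ₀ := by
    have he : η = fun θ => ∑ s, ρ₀ s * V θ s := funext hη
    rw [he]
    exact HasFDerivAt.fun_sum fun s _ => (hGd s).const_mul (ρ₀ s)
  have hDm_alt : ∀ s, ∑ a, Aπ s a • pa s a = Dm s := by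
    intro s
    have h1 : ∀ a, Aπ s a • pa s a = Q s a • pa s a - V θ₀ s • pa s a :=
      fun a => by rw [hA]; exact sub_smul (Q s a) (V θ₀ s) (pa s a)
    rw [Finset.sum_congr rfl fun a _ => h1 a, Finset.sum_sub_distrib, ← Finset.smul_sum,
      hpasum, smul_zero, sub_zero]
  have hLd : HasFDerivAt L (∑ s, visit P (π θ₀) ρ₀ γ s • Dm s) θ₀ := by
    have he : L = fun θ => η θ₀ + ∑ s, visit P (π θ₀) ρ₀ γ s * ∑ a, π θ s a * Aπ s a :=
      funext hL
    rw [he]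
    have hsum : HasFDerivAt (fun θ => ∑ s, visit P (π θ₀) ρ₀ γ s * ∑ a, π θ s a * Aπ s a)
        (∑ s, visit P (π θ₀) ρ₀ γ s • Dm s) θ₀ := by
      refine HasFDerivAt.fun_sum ?_
      intro s _
      rw [← hDm_alt s]
      refine HasFDerivAt.const_mul ?_ _
      refine HasFDerivAt.fun_sum ?_
      intro a _
      exact (hpa s a).mul_const (Aπ s a)
    exact hsum.const_add (η θ₀)
  constructor
  · have hz : ∀ s, ∑ a, π θ₀ s a * Aπ s a = 0 := by
      intro s
      have hVs : V θ₀ s = ∑ a, π θ₀ s a * Q s a := by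
        rw [hV θ₀ s]
        exact Finset.sum_congr rfl fun a _ => by rw [hQ]
      have : ∑ a, π θ₀ s a * Aπ s a
          = (∑ a, π θ₀ s a * Q s a) - (∑ a, π θ₀ s a) * V θ₀ s := by
        rw [Finset.sum_mul, ← Finset.sum_sub_distrib]
        exact Finset.sum_congr rfl fun a _ => by rw [hA]; ring
      rw [this, hπsum, ← hVs, one_mul, sub_self]
    simp [hL θ₀, hz]
  · rw [hLd.fderiv, hηd.fderiv]
    exact hEq2.symm.trans hEq1
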